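/- Let P_τ be a maximal ranked poset with ℓ ranks and n = Σ τ_i elements, 0 ≤ k ≤ ℓ, and let P_τ = C ⊔ O be the k-decomposition (C = elements of rank ≤ k together with 0̂, O = the rest together with 1̂). Then the chain-order polytope O_{C,O}(τ), defined by x_{0̂} = 0, x_{1̂} = 1, x_p ≥ 0 for p ∈ C, x_a ≤ x_b for covering relations a ⋖ b with a, b ∈ O, and x_{p_1} + ⋯ + x_{p_k} ≤ x_q for all choices p_i ∈ Y^i (1 ≤ i ≤ k) and q ∈ Y^{k+1}, has dimension n. -/

import Mathlib

/-- The underlying set of the maximal ranked poset `P_τ`: the disjoint union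
of rank sets `Y^i` with `|Y^i| = τ i`. -/
abbrev MaxRanked (ℓ : ℕ) (τ : Fin ℓ → ℕ) := Σ i : Fin ℓ, Fin (τ i)

/-- The order of the maximal ranked poset: `x < y` iff `rank x < rank y`. -/
instance MaxRanked.instPartialOrder (ℓ : ℕ) (τ : Fin ℓ → ℕ) :
    PartialOrder (MaxRanked ℓ τ) where
  le x y := x = y ∨ x.1 < y.1
  lt x y := x.1 < y.1
  le_refl x := Or.inl rfl
  le_trans x y z hxy hyz := by
    rcases hxy with rfl | h
    · exact hyz
    · rcases hyz with rfl | h'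
      · exact Or.inr h
      · exact Or.inr (h.trans h')
  lt_iff_le_not_ge x y := by
    constructor
    · intro h
      refine ⟨Or.inr h, ?_⟩
      rintro (rfl | h')
      · exact absurd h (lt_irrefl y.1)
      · exact absurd (h.trans h') (lt_irrefl x.1)
    · rintro ⟨rfl | h, hn⟩
      · exact absurd (Or.inl rfl) hn
      · exact h
  le_antisymm x y hxy hyx := by
    rcases hxy with rfl | h
    · rfl
    · rcases hyx with rfl | h'
      · rfl
      · exact absurd (h.trans h') (lt_irrefl x.1)

/-- The chain-order polytope `O_{C,O}(τ)` of the `k`-decomposition of the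
maximal ranked poset `P_τ` (ranks are indexed by `Fin ℓ`, so the paper's rank
`i` corresponds to index `i - 1`; the chain part `C` consists of the ranks
with index `< k`, together with `0̂`, and the order part `O` of the remaining
ranks together with `1̂`; the coordinates of `0̂` and `1̂` are fixed to `0`
and `1`). -/
def chainOrderPolytope (ℓ : ℕ) (τ : Fin ℓ → ℕ) (k : ℕ) :
    Set (MaxRanked ℓ τ → ℝ) :=
  {x | (∀ p : MaxRanked ℓ τ, (p.1 : ℕ) < k → 0 ≤ x p) ∧
    (∀ p q : MaxRanked ℓ τ, k ≤ (p.1 : ℕ) → (q.1 : ℕ) = (p.1 : ℕ) + 1 →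
      x p ≤ x q) ∧
    (∀ p : MaxRanked ℓ τ, k ≤ (p.1 : ℕ) → (p.1 : ℕ) = ℓ - 1 → x p ≤ 1) ∧
    (∀ (c : ∀ i : Fin ℓ, Fin (τ i)) (q : MaxRanked ℓ τ), (q.1 : ℕ) = k →
      ∑ i ∈ Finset.univ.filter (fun i : Fin ℓ => (i : ℕ) < k),
        x ⟨i, c i⟩ ≤ x q) ∧
    (k = ℓ → ∀ c : ∀ i : Fin ℓ, Fin (τ i), ∑ i : Fin ℓ, x ⟨i, c i⟩ ≤ 1)}

/-- The center candidate function: value depends only on the rank. -/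
noncomputable def copCenter (ℓ : ℕ) (τ : Fin ℓ → ℕ) (k : ℕ) :
    MaxRanked ℓ τ → ℝ :=
  fun p => if (p.1 : ℕ) < k then (((ℓ : ℝ) + 1)⁻¹)^2 / 4
    else 1/2 + (((p.1 : ℕ) : ℝ) + 1) * ((ℓ : ℝ) + 1)⁻¹ / 4

/-- Any function within `a²/8` of the center (where `a = (ℓ+1)⁻¹`) lies in
the chain-order polytope. -/
theorem copCenter_aux (ℓ : ℕ) (τ : Fin ℓ → ℕ) (k : ℕ) (hk : k ≤ ℓ)
    (g : MaxRanked ℓ τ → ℝ)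
    (hg : ∀ p : MaxRanked ℓ τ,
      |g p - copCenter ℓ τ k p| ≤ (((ℓ : ℝ) + 1)⁻¹)^2 / 8) :
    g ∈ chainOrderPolytope ℓ τ k := by
  set a : ℝ := ((ℓ : ℝ) + 1)⁻¹ with ha_def
  have hEpos : (0 : ℝ) < (ℓ : ℝ) + 1 := by positivity
  have ha : 0 < a := by positivity
  have ha1 : a ≤ 1 := by
    rw [ha_def, inv_le_one_iff₀]
    right
    exact le_add_of_nonneg_left (Nat.cast_nonneg ℓ)
  have hla : ((ℓ : ℝ) + 1) * a = 1 := mul_inv_cancel₀ (ne_of_gt hEpos)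
  have hla' : (ℓ : ℝ) * a ≤ 1 := by nlinarith
  have hb := fun p => abs_le.1 (hg p)
  refine ⟨?_, ?_, ?_, ?_, ?_⟩
  · -- nonnegativity on C
    intro p hp
    have h := (hb p).1
    rw [copCenter, if_pos hp] at h
    nlinarith [sq_nonneg a]
  · -- order relations on O
    intro p q hp hq
    have hqk : ¬ ((q.1 : ℕ) < k) := by omega
    have hpk : ¬ ((p.1 : ℕ) < k) := not_lt.2 hp
    have h1 := (hb p).2
    have h2 := (hb q).1
    rw [copCenter, if_neg hpk] at h1
    rw [copCenter, if_neg hqk] at h2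
    have hcast : (((q.1 : ℕ) : ℝ)) = ((p.1 : ℕ) : ℝ) + 1 := by
      rw [hq]; push_cast; ring
    rw [hcast] at h2
    nlinarith [sq_nonneg a]
  · -- top rank bounded by 1
    intro p hp hpe
    have hl1 : 1 ≤ ℓ := Nat.one_le_iff_ne_zero.2 (by rintro rfl; exact p.1.elim0)
    have hpk : ¬ ((p.1 : ℕ) < k) := not_lt.2 hp
    have h := (hb p).2
    rw [copCenter, if_neg hpk] at h
    have hcast : (((p.1 : ℕ) : ℝ)) + 1 = (ℓ : ℝ) := by
      have : (p.1 : ℕ) + 1 = ℓ := by omega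
      calc (((p.1 : ℕ) : ℝ)) + 1 = (((p.1 : ℕ) + 1 : ℕ) : ℝ) := by push_cast; ring
        _ = (ℓ : ℝ) := by rw [this]
    rw [hcast] at h
    nlinarith [sq_nonneg a]
  · -- chain inequality
    intro c q hq
    have hqk : ¬ ((q.1 : ℕ) < k) := by omega
    have h2 := (hb q).1
    rw [copCenter, if_neg hqk] at h2
    set S := Finset.univ.filter (fun i : Fin ℓ => (i : ℕ) < k) with hS
    have hterm : ∀ i ∈ S, g ⟨i, c i⟩ ≤ 3 * a^2 / 8 := by
      intro i hi
      have hik : (i : ℕ) < k := (Finset.mem_filter.1 hi).2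
      have h := (hb ⟨i, c i⟩).2
      rw [copCenter, if_pos hik] at h
      nlinarith
    have hsum : ∑ i ∈ S, g ⟨i, c i⟩ ≤ (S.card : ℝ) * (3 * a^2 / 8) := by
      calc ∑ i ∈ S, g ⟨i, c i⟩ ≤ ∑ _i ∈ S, 3 * a^2 / 8 :=
            Finset.sum_le_sum hterm
        _ = (S.card : ℝ) * (3 * a^2 / 8) := by
            rw [Finset.sum_const, nsmul_eq_mul]
    have hcard : (S.card : ℝ) ≤ (ℓ : ℝ) := by
      have : S.card ≤ ℓ := by
        calc S.card ≤ Finset.univ.card := Finset.card_filter_le _ _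
          _ = ℓ := by simp
      exact_mod_cast this
    have hqcast : (0:ℝ) ≤ ((q.1 : ℕ) : ℝ) := Nat.cast_nonneg _
    have hScard : (0:ℝ) ≤ (S.card : ℝ) := Nat.cast_nonneg _
    nlinarith [sq_nonneg a, mul_nonneg hScard (sq_nonneg a)]
  · -- k = ℓ case
    intro hkl c
    have hterm : ∀ i ∈ Finset.univ, g ⟨i, c i⟩ ≤ 3 * a^2 / 8 := by
      intro i _
      have hik : (i : ℕ) < k := by omega
      have h := (hb ⟨i, c i⟩).2
      rw [copCenter, if_pos hik] at h
      nlinarith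
    have hsum : ∑ i : Fin ℓ, g ⟨i, c i⟩ ≤ (ℓ : ℝ) * (3 * a^2 / 8) := by
      calc ∑ i : Fin ℓ, g ⟨i, c i⟩ ≤ ∑ _i : Fin ℓ, 3 * a^2 / 8 :=
            Finset.sum_le_sum hterm
        _ = (ℓ : ℝ) * (3 * a^2 / 8) := by
            rw [Finset.sum_const, nsmul_eq_mul]; simp
    nlinarith [sq_nonneg a]

/-- The chain-order polytope of any `k`-decomposition of the maximal ranked
poset `P_τ` is full-dimensional: its dimension is `n = ∑ τ_i`. -/
theorem chainOrderPolytope_fullDimensional (ℓ : ℕ) (τ : Fin ℓ → ℕ)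
    (hτ : ∀ i, 0 < τ i) (k : ℕ) (hk : k ≤ ℓ) :
    Module.finrank ℝ (vectorSpan ℝ (chainOrderPolytope ℓ τ k)) =
      ∑ i : Fin ℓ, τ i := by
  set H : ℝ := (((ℓ : ℝ) + 1)⁻¹)^2 / 8 with hHdef
  have hH : 0 < H := by positivity
  have hx₀ : copCenter ℓ τ k ∈ chainOrderPolytope ℓ τ k := by
    apply copCenter_aux ℓ τ k hk
    intro p
    rw [sub_self, abs_zero]; positivity
  have hsingle : ∀ p₀ : MaxRanked ℓ τ,
      Pi.single p₀ (1:ℝ) ∈ vectorSpan ℝ (chainOrderPolytope ℓ τ k) := by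
    intro p₀
    set x₁ : MaxRanked ℓ τ → ℝ :=
      fun q => copCenter ℓ τ k q + H * Pi.single (M := fun _ => ℝ) p₀ 1 q with hx₁def
    have hx₁ : x₁ ∈ chainOrderPolytope ℓ τ k := by
      apply copCenter_aux ℓ τ k hk
      intro p
      have : x₁ p - copCenter ℓ τ k p = H * (Pi.single (M := fun _ => ℝ) p₀ 1 p) := by
        simp [hx₁def]
      rw [this, Pi.single_apply p₀ (1:ℝ) p]
      by_cases hpp : p = p₀
      · rw [if_pos hpp, mul_one, abs_of_nonneg hH.le, hHdef, inv_pow]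
      · rw [if_neg hpp, mul_zero, abs_zero]; positivity
    have hmem : x₁ -ᵥ copCenter ℓ τ k ∈
        vectorSpan ℝ (chainOrderPolytope ℓ τ k) :=
      vsub_mem_vectorSpan ℝ hx₁ hx₀
    have heq : H⁻¹ • (x₁ -ᵥ copCenter ℓ τ k) = Pi.single p₀ (1:ℝ) := by
      funext q
      have : (x₁ -ᵥ copCenter ℓ τ k) q = H * Pi.single (M := fun _ => ℝ) p₀ 1 q := by
        simp [hx₁def]
      simp only [Pi.smul_apply, this, smul_eq_mul]
      rw [inv_mul_cancel_left₀ (ne_of_gt hH)]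
    have := Submodule.smul_mem _ H⁻¹ hmem
    rwa [heq] at this
  have htop : vectorSpan ℝ (chainOrderPolytope ℓ τ k) = ⊤ := by
    rw [eq_top_iff, ← (Pi.basisFun ℝ (MaxRanked ℓ τ)).span_eq]
    refine Submodule.span_le.2 ?_
    rintro _ ⟨p₀, rfl⟩
    rw [Pi.basisFun_apply]
    exact hsingle p₀
  rw [htop, finrank_top, Module.finrank_fintype_fun_eq_card]
  simp
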